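/- Let ℓ ≥ 1 and let Γ < U(2) consist of the 2ℓ elements diag(ω,ω⁻¹)ʲ and i·b·diag(ω,ω⁻¹)ʲ for 0 ≤ j ≤ ℓ−1, where ω is a primitive ℓ-th root of unity and b=[[0,1],[-1,0]]. Then the polynomials w₁w₂, w̄₁w̄₂, and w₁w̄₁ + w₂w̄₂ are Γ-invariant; in particular the space of Γ-invariant quadratics has dimension at least 3. -/

import Mathlib

open MvPolynomial Matrix Complex

/-- The action of `u ∈ U(2)` on polynomials in the coordinates (w₁, w₂, w̄₁, w̄₂):
`u` acts as diag(u, conj u). -/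
noncomputable def act (u : Matrix (Fin 2) (Fin 2) ℂ) :
    (Fin 2 ⊕ Fin 2) → MvPolynomial (Fin 2 ⊕ Fin 2) ℂ
  | Sum.inl i => ∑ j, C (u i j) * X (Sum.inl j)
  | Sum.inr i => ∑ j, C ((starRingEnd ℂ) (u i j)) * X (Sum.inr j)

noncomputable def bMat : Matrix (Fin 2) (Fin 2) ℂ := !![0, 1; -1, 0]

lemma coeff_XX (i j : Fin 2 ⊕ Fin 2) :
    (X i * X j : MvPolynomial (Fin 2 ⊕ Fin 2) ℂ)
      = monomial (Finsupp.single i 1 + Finsupp.single j 1) 1 := by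
  rw [X, X, monomial_mul, one_mul]

theorem stmt_19 (ℓ : ℕ) (hℓ : 1 ≤ ℓ) (ω : ℂ) (hω : IsPrimitiveRoot ω ℓ)
    (A : Matrix (Fin 2) (Fin 2) ℂ) (hA : A = !![ω, 0; 0, ω⁻¹])
    (Γ : Set (Matrix (Fin 2) (Fin 2) ℂ))
    (hΓ : Γ = {M | ∃ j : ℕ, M = A ^ j ∨ M = (I • bMat) * A ^ j}) :
    (∀ g ∈ Γ, ∀ p ∈ ({X (Sum.inl 0) * X (Sum.inl 1),
        X (Sum.inr 0) * X (Sum.inr 1),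
        X (Sum.inl 0) * X (Sum.inr 0) + X (Sum.inl 1) * X (Sum.inr 1)} :
          Set (MvPolynomial (Fin 2 ⊕ Fin 2) ℂ)),
      aeval (act g) p = p) ∧
    3 ≤ Module.finrank ℂ
      ↥((homogeneousSubmodule (Fin 2 ⊕ Fin 2) ℂ 2) ⊓
        ⨅ g ∈ Γ, LinearMap.eqLocus (aeval (act g)).toLinearMap LinearMap.id) := by
  have hℓ0 : ℓ ≠ 0 := by omega
  have hω0 : ω ≠ 0 := hω.ne_zero hℓ0
  have habs : ‖ω‖ = 1 := hω.norm'_eq_one hℓ0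
  have hconj : (starRingEnd ℂ) ω = ω⁻¹ := by
    rw [Complex.inv_def, Complex.normSq_eq_norm_sq]
    simp [habs]
  -- powers of A
  have hAj : ∀ j : ℕ, A ^ j = !![ω ^ j, 0; 0, (ω ^ j)⁻¹] := by
    intro j
    induction j with
    | zero => simp [pow_zero, Matrix.one_fin_two]
    | succ n ih =>
        rw [pow_succ, ih, hA, Matrix.mul_fin_two]
        simp [pow_succ, _root_.mul_inv_rev, mul_comm]
  -- the invariance statement
  have hinv : ∀ g ∈ Γ, ∀ p ∈ ({X (Sum.inl 0) * X (Sum.inl 1),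
        X (Sum.inr 0) * X (Sum.inr 1),
        X (Sum.inl 0) * X (Sum.inr 0) + X (Sum.inl 1) * X (Sum.inr 1)} :
          Set (MvPolynomial (Fin 2 ⊕ Fin 2) ℂ)),
      aeval (act g) p = p := by
    rintro g hg p hp
    rw [hΓ] at hg
    obtain ⟨j, hj | hj⟩ := hg
    · -- diagonal case
      have ha0 : ω ^ j ≠ 0 := pow_ne_zero _ hω0
      have hc1 : (starRingEnd ℂ) (ω ^ j) = (ω ^ j)⁻¹ := by
        rw [map_pow, hconj, inv_pow]
      have hc2 : (starRingEnd ℂ) ((ω ^ j)⁻¹) = ω ^ j := by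
        rw [map_inv₀, hc1, inv_inv]
      have HC : (C (ω ^ j) : MvPolynomial (Fin 2 ⊕ Fin 2) ℂ) * C ((ω ^ j)⁻¹) = 1 := by
        rw [← C_mul, mul_inv_cancel₀ ha0, C_1]
      rw [hj, hAj j]
      generalize hP : (ω ^ j : ℂ) = a at *
      rcases hp with hp | hp | hp <;> subst hp <;>
        simp only [_root_.map_mul, _root_.map_add, aeval_X, act, Fin.sum_univ_two,
          Matrix.of_apply, Matrix.cons_val', Matrix.cons_val_zero, Matrix.cons_val_one,
          Matrix.head_cons, Matrix.head_fin_const, Matrix.empty_val', Matrix.cons_val_fin_one,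
          hc1, hc2, C_0, zero_mul, add_zero, zero_add, map_zero]
      · linear_combination (X (Sum.inl 0) * X (Sum.inl 1) : MvPolynomial (Fin 2 ⊕ Fin 2) ℂ) * HC
      · linear_combination (X (Sum.inr 0) * X (Sum.inr 1) : MvPolynomial (Fin 2 ⊕ Fin 2) ℂ) * HC
      · linear_combination (X (Sum.inl 0) * X (Sum.inr 0)
          + X (Sum.inl 1) * X (Sum.inr 1) : MvPolynomial (Fin 2 ⊕ Fin 2) ℂ) * HC
    · -- antidiagonal case
      have ha0 : ω ^ j ≠ 0 := pow_ne_zero _ hω0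
      have hIb : I • bMat = !![(0:ℂ), I; -I, 0] := by
        ext i k
        fin_cases i <;> fin_cases k <;> simp [bMat]
      have hBA : (I • bMat) * A ^ j = !![0, I * (ω ^ j)⁻¹; -(I * ω ^ j), 0] := by
        rw [hIb, hAj j, Matrix.mul_fin_two]
        simp [neg_mul]
      have huv : (I * (ω ^ j)⁻¹) * (-(I * ω ^ j)) = 1 := by
        have h := mul_inv_cancel₀ ha0
        linear_combination (-((ω ^ j)⁻¹ * ω ^ j)) * Complex.I_mul_I + h
      have hcu : (starRingEnd ℂ) (I * (ω ^ j)⁻¹) = -(I * ω ^ j) := by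
        simp [map_inv₀, map_pow, hconj, Complex.conj_I, inv_pow, neg_mul]
      have hcv : (starRingEnd ℂ) (-(I * ω ^ j)) = I * (ω ^ j)⁻¹ := by
        simp [map_pow, hconj, Complex.conj_I, inv_pow, neg_mul]
      have HC : (C (I * (ω ^ j)⁻¹) : MvPolynomial (Fin 2 ⊕ Fin 2) ℂ)
          * C (-(I * ω ^ j)) = 1 := by
        rw [← C_mul, huv, C_1]
      rw [hj, hBA]
      generalize hu : (I * (ω ^ j)⁻¹ : ℂ) = u at *
      generalize hv : (-(I * ω ^ j) : ℂ) = v at *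
      rcases hp with hp | hp | hp <;> subst hp <;>
        simp only [_root_.map_mul, _root_.map_add, aeval_X, act, Fin.sum_univ_two,
          Matrix.of_apply, Matrix.cons_val', Matrix.cons_val_zero, Matrix.cons_val_one,
          Matrix.head_cons, Matrix.head_fin_const, Matrix.empty_val', Matrix.cons_val_fin_one,
          hcu, hcv, C_0, zero_mul, add_zero, zero_add, map_zero]
      · linear_combination (X (Sum.inl 0) * X (Sum.inl 1) : MvPolynomial (Fin 2 ⊕ Fin 2) ℂ) * HC
      · linear_combination (X (Sum.inr 0) * X (Sum.inr 1) : MvPolynomial (Fin 2 ⊕ Fin 2) ℂ) * HC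
      · linear_combination (X (Sum.inl 0) * X (Sum.inr 0)
          + X (Sum.inl 1) * X (Sum.inr 1) : MvPolynomial (Fin 2 ⊕ Fin 2) ℂ) * HC
  refine ⟨hinv, ?_⟩
  -- the dimension bound
  set S : Submodule ℂ (MvPolynomial (Fin 2 ⊕ Fin 2) ℂ) :=
    (homogeneousSubmodule (Fin 2 ⊕ Fin 2) ℂ 2) ⊓
      ⨅ g ∈ Γ, LinearMap.eqLocus (aeval (act g)).toLinearMap LinearMap.id with hS
  set P : Fin 3 → MvPolynomial (Fin 2 ⊕ Fin 2) ℂ :=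
    ![X (Sum.inl 0) * X (Sum.inl 1), X (Sum.inr 0) * X (Sum.inr 1),
      X (Sum.inl 0) * X (Sum.inr 0) + X (Sum.inl 1) * X (Sum.inr 1)] with hPdef
  have hmem : ∀ i, P i ∈ S := by
    intro i
    refine Submodule.mem_inf.mpr ⟨?_, ?_⟩
    · rw [mem_homogeneousSubmodule]
      fin_cases i <;> simp only [hPdef, Matrix.cons_val_zero, Matrix.cons_val_one,
        Matrix.head_cons, Matrix.cons_val_two, Matrix.tail_cons]
      · exact (isHomogeneous_X _ _).mul (isHomogeneous_X _ _)
      · exact (isHomogeneous_X _ _).mul (isHomogeneous_X _ _)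
      · exact ((isHomogeneous_X _ _).mul (isHomogeneous_X _ _)).add
          ((isHomogeneous_X _ _).mul (isHomogeneous_X _ _))
    · rw [Submodule.mem_iInf]
      intro g
      rw [Submodule.mem_iInf]
      intro hg
      show aeval (act g) (P i) = P i
      apply hinv g hg
      fin_cases i <;> simp [hPdef]
  -- notation for the four relevant monomials
  set d1 : (Fin 2 ⊕ Fin 2) →₀ ℕ :=
    Finsupp.single (Sum.inl 0) 1 + Finsupp.single (Sum.inl 1) 1 with hd1
  set d2 : (Fin 2 ⊕ Fin 2) →₀ ℕ :=
    Finsupp.single (Sum.inr 0) 1 + Finsupp.single (Sum.inr 1) 1 with hd2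
  set d3 : (Fin 2 ⊕ Fin 2) →₀ ℕ :=
    Finsupp.single (Sum.inl 0) 1 + Finsupp.single (Sum.inr 0) 1 with hd3
  set d4 : (Fin 2 ⊕ Fin 2) →₀ ℕ :=
    Finsupp.single (Sum.inl 1) 1 + Finsupp.single (Sum.inr 1) 1 with hd4
  have pair_ne : ∀ (m m' : (Fin 2 ⊕ Fin 2) →₀ ℕ) (x : Fin 2 ⊕ Fin 2),
      m x ≠ m' x → m ≠ m' := fun m m' x h e => h (by rw [e])
  have n21 : d2 ≠ d1 := pair_ne _ _ (Sum.inl 0) (by simp [hd1, hd2])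
  have n31 : d3 ≠ d1 := pair_ne _ _ (Sum.inl 1) (by simp [hd1, hd3])
  have n41 : d4 ≠ d1 := pair_ne _ _ (Sum.inl 0) (by simp [hd1, hd4])
  have n12 : d1 ≠ d2 := n21.symm
  have n32 : d3 ≠ d2 := pair_ne _ _ (Sum.inl 0) (by simp [hd2, hd3])
  have n42 : d4 ≠ d2 := pair_ne _ _ (Sum.inl 1) (by simp [hd2, hd4])
  have n13 : d1 ≠ d3 := n31.symm
  have n23 : d2 ≠ d3 := n32.symm
  have n43 : d4 ≠ d3 := pair_ne _ _ (Sum.inl 0) (by simp [hd3, hd4])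
  -- linear independence of P
  have hli : LinearIndependent ℂ P := by
    rw [Fintype.linearIndependent_iff]
    intro c hc
    have key : ∀ (m : (Fin 2 ⊕ Fin 2) →₀ ℕ),
        c 0 * coeff m (P 0) + c 1 * coeff m (P 1) + c 2 * coeff m (P 2) = 0 := by
      intro m
      have := congrArg (coeff m) hc
      rw [Fin.sum_univ_three] at this
      simpa [coeff_add, coeff_smul, smul_eq_mul] using this
    have hP0 : P 0 = monomial d1 1 := by simp [hPdef, coeff_XX, hd1]
    have hP1 : P 1 = monomial d2 1 := by simp [hPdef, coeff_XX, hd2]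
    have hP2 : P 2 = monomial d3 1 + monomial d4 1 := by
      simp [hPdef, coeff_XX, hd3, hd4]
    have k1 := key d1
    have k2 := key d2
    have k3 := key d3
    rw [hP0, hP1, hP2] at k1 k2 k3
    simp only [coeff_add, coeff_monomial, if_pos rfl, if_neg n21, if_neg n31, if_neg n41,
      if_neg n12, if_neg n32, if_neg n42, if_neg n13, if_neg n23, if_neg n43,
      mul_one, mul_zero, add_zero, zero_add, mul_add] at k1 k2 k3
    intro i
    fin_cases i
    · simpa using k1
    · simpa using k2
    · simpa using k3
  -- finite dimensionality
  have hsub : S ≤ restrictTotalDegree (Fin 2 ⊕ Fin 2) ℂ 2 :=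
    le_trans inf_le_left (fun p hp => (mem_restrictTotalDegree _ _ _).mpr
      ((mem_homogeneousSubmodule _ _).mp hp).totalDegree_le)
  have hfd : FiniteDimensional ℂ ↥S := Submodule.finiteDimensional_of_le hsub
  have hliS : LinearIndependent ℂ (fun i : Fin 3 => (⟨P i, hmem i⟩ : S)) := by
    apply LinearIndependent.of_comp S.subtype
    exact hli
  simpa using hliS.fintype_card_le_finrank
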